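/- If a finite poset P with p elements is ω-graded of rank r, then 2 e_{p-1}(P,ω) = (p + r - 1) e_p(P,ω), where e_i(P,ω) is the number of surjective (P,ω)-partitions onto {1,...,i}. -/

import Mathlib

open Polynomial

variable {P : Type*}

/-- The ε-weight of a chain `x₀ ⋖ x₁ ⋖ ⋯ ⋖ xₙ`, recorded as a list:
the sum `Σ ε(x_{i-1}, x_i)` over consecutive pairs. -/
def chainWeight (ε : P → P → ℤ) (c : List P) : ℤ :=
  ((c.zip c.tail).map fun q => ε q.1 q.2).sum

/-- A (nonempty) saturated chain of the poset `P`, as a list of elements with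
each member covered by the next. -/
def IsSatChain [PartialOrder P] (c : List P) : Prop :=
  c ≠ [] ∧ c.Chain' (· ⋖ ·)

/-- A maximal chain: a saturated chain starting at a minimal element and
ending at a maximal element. -/
def IsMaxChainL [PartialOrder P] (c : List P) : Prop :=
  IsSatChain c ∧ (∀ x ∈ c.head?, IsMin x) ∧ (∀ x ∈ c.getLast?, IsMax x)

/-- A saturated chain starting at a minimal element of `P` and ending at `x`. -/
def IsSatChainFromMinTo [PartialOrder P] (x : P) (c : List P) : Prop :=
  IsSatChain c ∧ (∀ y ∈ c.head?, IsMin y) ∧ c.getLast? = some x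

/-- `ε` takes only the values `1` and `-1` on covering relations. -/
def IsSignLabeling [PartialOrder P] (ε : P → P → ℤ) : Prop :=
  ∀ x y : P, x ⋖ y → ε x y = 1 ∨ ε x y = -1

/-- `P` is `ε`-graded of rank `r`: every maximal chain has ε-weight `r`. -/
def IsEGraded [PartialOrder P] (ε : P → P → ℤ) (r : ℤ) : Prop :=
  ∀ c : List P, IsMaxChainL c → chainWeight ε c = r

/-- A `(P,ε)`-partition: an order-reversing map `σ : P → {1,2,…}` which is
strict on covering relations labeled `-1`. -/
def IsPPartition [PartialOrder P] (ε : P → P → ℤ) (σ : P → ℤ) : Prop :=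
  (∀ x, 1 ≤ σ x) ∧ (∀ x y : P, x ≤ y → σ y ≤ σ x) ∧
  (∀ x y : P, x ⋖ y → ε x y = -1 → σ y < σ x)

/-- `Ω(P,ε;n)`: the number of `(P,ε)`-partitions with largest part at most `n`. -/
noncomputable def OmegaCount [PartialOrder P] (ε : P → P → ℤ) (n : ℕ) : ℕ :=
  Nat.card {σ : P → ℤ // IsPPartition ε σ ∧ ∀ x, σ x ≤ (n : ℤ)}

/-- `e_i(P,ε)`: the number of surjective `(P,ε)`-partitions `σ : P ↠ {1,…,i}`. -/
noncomputable def surjCount [PartialOrder P] (ε : P → P → ℤ) (i : ℕ) : ℕ :=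
  Nat.card {σ : P → ℤ // IsPPartition ε σ ∧ (∀ x, σ x ≤ (i : ℤ)) ∧
    ∀ k : ℤ, 1 ≤ k → k ≤ (i : ℤ) → ∃ x, σ x = k}

namespace SG
set_option linter.unusedSectionVars false
open Finset

section Basic
variable [PartialOrder P]

/-- The complementary labeling. -/
def flipL (ε : P → P → ℤ) : P → P → ℤ := fun x y => -ε x y

/-- The predicate counted by `surjCount`. -/
def SurjPred (ε : P → P → ℤ) (i : ℕ) (σ : P → ℤ) : Prop :=
  IsPPartition ε σ ∧ (∀ x, σ x ≤ (i : ℤ)) ∧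
    ∀ k : ℤ, 1 ≤ k → k ≤ (i : ℤ) → ∃ x, σ x = k

lemma surjCount_def (ε : P → P → ℤ) (i : ℕ) :
    surjCount ε i = Nat.card {σ : P → ℤ // SurjPred ε i σ} := rfl

lemma finite_part [Finite P] (A : (P → ℤ) → Prop) (n : ℤ)
    (h : ∀ σ, A σ → ∀ x, 1 ≤ σ x ∧ σ x ≤ n) : Finite {σ // A σ} := by
  classical
  have hinj : Function.Injective
      (fun σ : {σ // A σ} => (fun x => (⟨σ.1 x, (h σ.1 σ.2 x).1, (h σ.1 σ.2 x).2⟩ :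
        Set.Icc (1:ℤ) n)) : _ → (P → Set.Icc (1:ℤ) n)) := by
    intro a b hab
    apply Subtype.ext; funext x
    exact congrArg Subtype.val (congrFun hab x)
  exact Finite.of_injective _ hinj

end Basic

section FinBasic
variable [PartialOrder P] [Fintype P]

lemma exists_max_above (x : P) : ∃ y, x ≤ y ∧ IsMax y := by
  classical
  obtain ⟨m, hm, hmax⟩ := Finset.exists_maximal (s := Finset.univ.filter (fun y => x ≤ y))
    ⟨x, by simp⟩
  simp only [Finset.mem_filter, Finset.mem_univ, true_and] at hm
  refine ⟨m, hm, fun b hb => ?_⟩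
  by_contra hbm
  exact hbm (hmax (by simp [le_trans hm hb]) hb)

lemma exists_min_below (x : P) : ∃ y, y ≤ x ∧ IsMin y := by
  classical
  obtain ⟨m, hm, hmin⟩ := Finset.exists_minimal (s := Finset.univ.filter (fun y => y ≤ x))
    ⟨x, by simp⟩
  simp only [Finset.mem_filter, Finset.mem_univ, true_and] at hm
  refine ⟨m, hm, fun b hb => ?_⟩
  by_contra hbm
  exact hbm (hmin (by simp [le_trans hb hm]) hb)

/-- Between `x < y` there is an element covered by `y` and above `x`. -/
lemma exists_covby_between {x y : P} (h : x < y) : ∃ z, x ≤ z ∧ z ⋖ y := by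
  classical
  obtain ⟨z, hz, hzmax⟩ := Finset.exists_maximal
    (s := Finset.univ.filter (fun t => x ≤ t ∧ t < y)) ⟨x, by simp [h]⟩
  simp only [Finset.mem_filter, Finset.mem_univ, true_and] at hz
  refine ⟨z, hz.1, hz.2, fun t hzt hty => ?_⟩
  exact hzt.not_ge (hzmax (by simp [le_trans hz.1 hzt.le, hty]) hzt.le)

/-- Transport of cover-level antitonicity to `≤`. -/
lemma antitone_of_covers {τ : P → ℤ} (h : ∀ a b : P, a ⋖ b → τ b ≤ τ a) :
    ∀ x y : P, x ≤ y → τ y ≤ τ x := by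
  intro x y
  induction y using WellFoundedLT.induction with
  | ind y IH =>
    intro hxy
    rcases eq_or_lt_of_le hxy with rfl | hlt
    · exact le_rfl
    · obtain ⟨z, hxz, hzy⟩ := exists_covby_between hlt
      exact le_trans (h z y hzy) (IH z hzy.lt hxz)

end FinBasic
end SG
namespace SG
section Chains
variable [PartialOrder P]

lemma chainWeight_nil (ε : P → P → ℤ) : chainWeight ε ([] : List P) = 0 := rfl

lemma chainWeight_single (ε : P → P → ℤ) (a : P) : chainWeight ε [a] = 0 := rfl

lemma chainWeight_cons (ε : P → P → ℤ) (a b : P) (t : List P) :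
    chainWeight ε (a :: b :: t) = ε a b + chainWeight ε (b :: t) := by
  simp [chainWeight, List.zip]

lemma chainWeight_concat (ε : P → P → ℤ) :
    ∀ (c : List P) (x y : P), c.getLast? = some x →
      chainWeight ε (c ++ [y]) = chainWeight ε c + ε x y := by
  intro c
  induction c with
  | nil => intro x y h; simp at h
  | cons a t IH =>
    intro x y h
    match t with
    | [] =>
      simp only [List.getLast?_singleton, Option.some.injEq] at h
      subst h
      simp [chainWeight_cons, chainWeight_single, chainWeight_nil]
    | b :: t' =>
      rw [List.getLast?_cons_cons] at h
      have := IH x y h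
      simp only [List.cons_append] at *
      rw [chainWeight_cons, chainWeight_cons, this]
      ring

/-- Gluing a chain ending at `x` with a chain starting at `x`. -/
lemma glue_chains (ε : P → P → ℤ) :
    ∀ (d c : List P) (x : P), d.head? = some x → c.getLast? = some x →
      c.Chain' (· ⋖ ·) → d.Chain' (· ⋖ ·) →
      (c ++ d.tail).Chain' (· ⋖ ·) ∧
      chainWeight ε (c ++ d.tail) = chainWeight ε c + chainWeight ε d ∧
      (c ++ d.tail).getLast? = d.getLast? := by
  intro d
  induction d with
  | nil => intro c x h; simp at h
  | cons a t IH =>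
    intro c x h hc hcch hdch
    simp only [List.head?_cons, Option.some.injEq] at h
    subst h
    match t with
    | [] =>
      simp [chainWeight_single, hcch, hc]
    | b :: t' =>
      have hab : a ⋖ b := List.isChain_cons_cons.mp hdch |>.1
      have hcb : (c ++ [b]).Chain' (· ⋖ ·) := by
        rw [List.Chain', List.isChain_append]
        refine ⟨hcch, List.isChain_singleton b, ?_⟩
        intro p hp q hq
        rw [hc] at hp
        simp only [Option.mem_def, Option.some.injEq, List.head?_cons] at hp hq
        subst hp; subst hq; exact hab
      have hlast : (c ++ [b]).getLast? = some b := by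
        simp [List.getLast?_append]
      have hd' : (b :: t').Chain' (· ⋖ ·) := (List.isChain_cons_cons.mp hdch).2
      obtain ⟨h1, h2, h3⟩ := IH (c ++ [b]) b rfl hlast hcb hd'
      have hre : (c ++ [b]) ++ (b :: t').tail = c ++ (a :: b :: t').tail := by
        simp
      constructor
      · rw [← hre]; exact h1
      constructor
      · rw [← hre, h2, chainWeight_concat ε c a b hc, chainWeight_cons]
        ring
      · rw [← hre, h3]
        simp [List.getLast?_cons_cons]

end Chains

section Rho
variable [PartialOrder P] [Fintype P]

lemma exists_chain_to (x : P) : ∃ c, IsSatChainFromMinTo x c := by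
  induction x using WellFoundedLT.induction with
  | ind x IH =>
    by_cases hx : IsMin x
    · exact ⟨[x], ⟨by simp, List.isChain_singleton x⟩, by simpa using hx, by simp⟩
    · obtain ⟨y, hy⟩ := exists_covBy_of_wellFoundedGT hx
      obtain ⟨c, ⟨hne, hch⟩, hhead, hlast⟩ := IH y hy.lt
      refine ⟨c ++ [x], ⟨by simp, ?_⟩, ?_, by simp [List.getLast?_append]⟩
      · rw [List.Chain', List.isChain_append]
        refine ⟨hch, List.isChain_singleton x, ?_⟩
        intro p hp q hq
        rw [hlast] at hp
        simp only [Option.mem_def, Option.some.injEq, List.head?_cons] at hp hq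
        subst hp; subst hq; exact hy
      · intro z hz
        rcases c with _ | ⟨a, t⟩
        · simp at hne
        · simp only [List.cons_append, List.head?_cons, Option.mem_def,
            Option.some.injEq] at hz
          subst hz
          exact hhead a (by simp)

/-- A saturated chain from `x` up to a maximal element. -/
lemma exists_chain_up (x : P) : ∃ c : List P, c.head? = some x ∧
    c.Chain' (· ⋖ ·) ∧ (∀ y ∈ c.getLast?, IsMax y) := by
  induction x using WellFoundedGT.induction with
  | ind x IH =>
    by_cases hx : IsMax x
    · exact ⟨[x], by simp, List.isChain_singleton x, by simpa using hx⟩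
    · obtain ⟨y, hy⟩ := exists_covBy_of_wellFoundedLT hx
      obtain ⟨c, hhead, hch, hlast⟩ := IH y hy.lt
      refine ⟨x :: c, by simp, ?_, ?_⟩
      · rw [List.Chain', List.isChain_cons]
        refine ⟨?_, hch⟩
        intro z hz
        rw [hhead] at hz
        simp only [Option.mem_def, Option.some.injEq] at hz
        subst hz; exact hy
      · intro z hz
        rcases c with _ | ⟨a, t⟩
        · simp at hhead
        · rw [List.getLast?_cons_cons] at hz
          exact hlast z hz

variable (ε : P → P → ℤ)

noncomputable def rho (x : P) : ℤ :=
  chainWeight ε (Classical.choose (exists_chain_to x))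

variable {r : ℤ} {ε}

lemma chainWeight_eq_rho (hgr : IsEGraded ε r) {x : P} {c : List P}
    (hc : IsSatChainFromMinTo x c) : chainWeight ε c = rho ε x := by
  have hc₀ := Classical.choose_spec (exists_chain_to (P := P) x)
  set c₀ := Classical.choose (exists_chain_to (P := P) x)
  obtain ⟨d, hdhead, hdch, hdlast⟩ := exists_chain_up x
  have key : ∀ e : List P, IsSatChainFromMinTo x e →
      chainWeight ε e + chainWeight ε d = r := by
    intro e ⟨⟨hne, hch⟩, hhead, hlast⟩
    obtain ⟨h1, h2, h3⟩ := glue_chains ε d e x hdhead hlast hch hdch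
    have hmax : IsMaxChainL (e ++ d.tail) := by
      refine ⟨⟨by simp [hne], h1⟩, ?_, by rw [h3]; exact hdlast⟩
      intro z hz
      rcases e with _ | ⟨a, t⟩
      · simp at hne
      · simp only [List.cons_append, List.head?_cons, Option.mem_def,
          Option.some.injEq] at hz
        subst hz; exact hhead a (by simp)
    have := hgr _ hmax
    rw [h2] at this; linarith
  have h1 := key c hc
  have h2 := key c₀ hc₀
  unfold c₀ at h2
  rw [rho]; linarith

lemma rho_min (hgr : IsEGraded ε r) {x : P} (hx : IsMin x) : rho ε x = 0 := by
  have : IsSatChainFromMinTo x [x] := ⟨⟨by simp, List.isChain_singleton x⟩, by simpa using hx, by simp⟩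
  rw [← chainWeight_eq_rho hgr this, chainWeight_single]

lemma rho_covBy (hgr : IsEGraded ε r) {x y : P} (hxy : x ⋖ y) :
    rho ε y = rho ε x + ε x y := by
  obtain ⟨c, hc⟩ := exists_chain_to (P := P) x
  obtain ⟨⟨hne, hch⟩, hhead, hlast⟩ := hc
  have hcy : IsSatChainFromMinTo y (c ++ [y]) := by
    refine ⟨⟨by simp, ?_⟩, ?_, by simp [List.getLast?_append]⟩
    · rw [List.Chain', List.isChain_append]
      refine ⟨hch, List.isChain_singleton y, ?_⟩
      intro p hp q hq
      rw [hlast] at hp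
      simp only [Option.mem_def, Option.some.injEq, List.head?_cons] at hp hq
      subst hp; subst hq; exact hxy
    · intro z hz
      rcases c with _ | ⟨a, t⟩
      · simp at hne
      · simp only [List.cons_append, List.head?_cons, Option.mem_def,
          Option.some.injEq] at hz
        subst hz; exact hhead a (by simp)
  rw [← chainWeight_eq_rho hgr hcy, chainWeight_concat ε c x y hlast,
    chainWeight_eq_rho hgr ⟨⟨hne, hch⟩, hhead, hlast⟩]

lemma rho_max (hgr : IsEGraded ε r) {x : P} (hx : IsMax x) : rho ε x = r := by
  obtain ⟨c, hc⟩ := exists_chain_to (P := P) x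
  rw [← chainWeight_eq_rho hgr hc]
  refine hgr c ⟨hc.1, hc.2.1, ?_⟩
  intro z hz
  rw [hc.2.2] at hz
  simp only [Option.mem_def, Option.some.injEq] at hz
  subst hz; exact hx

end Rho
end SG
namespace SG
set_option linter.unusedSectionVars false
open Finset
section Counting
variable [PartialOrder P] [Fintype P]

lemma surjp_top {ε : P → P → ℤ} {q : ℕ} (hq : Fintype.card P = q + 1)
    {f : P → ℤ} (hf : SurjPred ε (q+1) f) :
    (∀ x y : P, x < y → f y < f x) ∧ Function.Injective f ∧
      (∀ k : ℤ, 1 ≤ k → k ≤ (q:ℤ)+1 → ∃! x, f x = k) := by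
  classical
  have hub : ∀ x, f x ≤ (q:ℤ)+1 := by
    intro x; have := hf.2.1 x; push_cast at this ⊢; linarith
  have hmem : ∀ x, f x ∈ Finset.Icc (1:ℤ) ((q:ℤ)+1) :=
    fun x => Finset.mem_Icc.mpr ⟨hf.1.1 x, hub x⟩
  set g : P → ↥(Finset.Icc (1:ℤ) ((q:ℤ)+1)) := fun x => ⟨f x, hmem x⟩ with hg
  have hsurj : Function.Surjective g := by
    rintro ⟨k, hk⟩
    rw [Finset.mem_Icc] at hk
    obtain ⟨x, hx⟩ := hf.2.2 k hk.1 (by push_cast; linarith [hk.2])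
    exact ⟨x, Subtype.ext hx⟩
  have hcard : Fintype.card P = Fintype.card ↥(Finset.Icc (1:ℤ) ((q:ℤ)+1)) := by
    rw [Fintype.card_coe, Int.card_Icc, hq]; omega
  have hbij : Function.Bijective g :=
    (Fintype.bijective_iff_surjective_and_card g).mpr ⟨hsurj, hcard⟩
  have hinj : Function.Injective f := by
    intro a b hab; exact hbij.1 (Subtype.ext hab)
  refine ⟨?_, hinj, ?_⟩
  · intro x y hxy
    exact lt_of_le_of_ne (hf.1.2.1 x y hxy.le) (fun h => hxy.ne (hinj h).symm)
  · intro k h1 h2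
    obtain ⟨x, hx⟩ := hf.2.2 k h1 (by push_cast; linarith)
    exact ⟨x, hx, fun y hy => hinj (hy.trans hx.symm)⟩

lemma surjp_pigeon {q : ℕ} (hq : Fintype.card P = q + 1) {σ : P → ℤ}
    (hlb : ∀ x, 1 ≤ σ x) (hub : ∀ x, σ x ≤ (q:ℤ)) :
    ∃ u v : P, u ≠ v ∧ σ u = σ v := by
  classical
  have hmem : ∀ x, σ x ∈ Finset.Icc (1:ℤ) (q:ℤ) :=
    fun x => Finset.mem_Icc.mpr ⟨hlb x, hub x⟩
  have hcard : Fintype.card ↥(Finset.Icc (1:ℤ) (q:ℤ)) < Fintype.card P := by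
    rw [Fintype.card_coe, Int.card_Icc, hq]; omega
  obtain ⟨x, y, hxy, he⟩ := Fintype.exists_ne_map_eq_of_card_lt
    (fun x : P => (⟨σ x, hmem x⟩ : ↥(Finset.Icc (1:ℤ) (q:ℤ)))) hcard
  exact ⟨x, y, hxy, congrArg Subtype.val he⟩

lemma surjp_fibers {q : ℕ} (hq : Fintype.card P = q + 1) {σ : P → ℤ}
    (hlb : ∀ x, 1 ≤ σ x) (hub : ∀ x, σ x ≤ (q:ℤ))
    (hsurj : ∀ k : ℤ, 1 ≤ k → k ≤ (q:ℤ) → ∃ x, σ x = k)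
    {u₀ v₀ : P} (huv : u₀ ≠ v₀) (he : σ u₀ = σ v₀) :
    (∀ x y : P, σ x = σ y → x ≠ y → σ x = σ u₀) ∧
      (∀ y : P, σ y = σ u₀ → y = u₀ ∨ y = v₀) := by
  classical
  set d := σ u₀ with hd
  set t := Finset.Icc (1:ℤ) (q:ℤ) with ht
  set F : ℤ → ℕ := fun j => (Finset.univ.filter (fun x : P => σ x = j)).card with hF
  have htc : t.card = q := by rw [ht, Int.card_Icc]; omega
  have hmem : ∀ x : P, σ x ∈ t := fun x => Finset.mem_Icc.mpr ⟨hlb x, hub x⟩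
  have hsum : ∑ j ∈ t, F j = q + 1 := by
    rw [← hq, ← Finset.card_univ]
    exact (Finset.card_eq_sum_card_fiberwise (fun x _ => hmem x)).symm
  have hge : ∀ j ∈ t, 1 ≤ F j := by
    intro j hj
    rw [ht, Finset.mem_Icc] at hj
    obtain ⟨x, hx⟩ := hsurj j hj.1 hj.2
    exact Finset.card_pos.mpr ⟨x, by simp [hF, hx]⟩
  have hdt : d ∈ t := hmem u₀
  have hsub : ∀ (s : Finset P), (∀ z ∈ s, σ z = d) → s.card ≤ F d := by
    intro s hs
    apply Finset.card_le_card
    intro z hz; simp only [hF, Finset.mem_filter, Finset.mem_univ, true_and]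
    exact hs z hz
  have hrest : ∀ (s : Finset ℤ), s ⊆ t → s.card ≤ ∑ j ∈ s, F j := by
    intro s hsub'
    calc s.card = ∑ _j ∈ s, 1 := by simp
    _ ≤ ∑ j ∈ s, F j := Finset.sum_le_sum (fun j hj => hge j (hsub' hj))
  have hd2 : 2 ≤ F d := by
    have : ({u₀, v₀} : Finset P).card ≤ F d := by
      apply hsub
      intro z hz
      simp only [Finset.mem_insert, Finset.mem_singleton] at hz
      rcases hz with rfl | rfl
      · rfl
      · exact he.symm
    rwa [Finset.card_pair huv] at this
  constructor
  · intro x y hxy hne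
    by_contra hxd
    have hjt : σ x ∈ t.erase d := Finset.mem_erase.mpr ⟨hxd, hmem x⟩
    have h2j : 2 ≤ F (σ x) := by
      have : ({x, y} : Finset P).card ≤ F (σ x) := by
        apply Finset.card_le_card
        intro z hz
        simp only [Finset.mem_insert, Finset.mem_singleton] at hz
        simp only [hF, Finset.mem_filter, Finset.mem_univ, true_and]
        rcases hz with rfl | rfl
        · rfl
        · exact hxy.symm
      rwa [Finset.card_pair hne] at this
    have e1 : F d + ∑ j ∈ t.erase d, F j = ∑ j ∈ t, F j := Finset.add_sum_erase t F hdt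
    have e2 : F (σ x) + ∑ j ∈ (t.erase d).erase (σ x), F j = ∑ j ∈ t.erase d, F j :=
      Finset.add_sum_erase _ F hjt
    have e3 : ((t.erase d).erase (σ x)).card ≤ ∑ j ∈ (t.erase d).erase (σ x), F j :=
      hrest _ (fun z hz => Finset.mem_of_mem_erase (Finset.mem_of_mem_erase hz))
    have c1 : (t.erase d).card = q - 1 := by rw [Finset.card_erase_of_mem hdt, htc]
    have c2 : ((t.erase d).erase (σ x)).card = q - 1 - 1 := by
      rw [Finset.card_erase_of_mem hjt, c1]
    have hq2 : 2 ≤ q := by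
      have : d ∈ t := hdt
      have h2 : σ x ∈ t := hmem x
      have : 1 ≤ (t.erase d).card := Finset.card_pos.mpr ⟨σ x, hjt⟩
      omega
    omega
  · intro y hy
    by_contra hcon
    push_neg at hcon
    have h3 : 3 ≤ F d := by
      have hc : ({u₀, v₀, y} : Finset P).card = 3 := by
        rw [Finset.card_insert_of_notMem, Finset.card_insert_of_notMem, Finset.card_singleton]
        · simp only [Finset.mem_singleton]
          exact fun h => hcon.2 h.symm
        · simp only [Finset.mem_insert, Finset.mem_singleton]
          push_neg
          exact ⟨huv, fun h => hcon.1 h.symm⟩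
      have : ({u₀, v₀, y} : Finset P).card ≤ F d := by
        apply hsub
        intro z hz
        simp only [Finset.mem_insert, Finset.mem_singleton] at hz
        rcases hz with rfl | rfl | rfl
        · rfl
        · exact he.symm
        · exact hy
      omega
    have e1 : F d + ∑ j ∈ t.erase d, F j = ∑ j ∈ t, F j := Finset.add_sum_erase t F hdt
    have e3 : (t.erase d).card ≤ ∑ j ∈ t.erase d, F j :=
      hrest _ (fun z hz => Finset.mem_of_mem_erase hz)
    have c1 : (t.erase d).card = q - 1 := by rw [Finset.card_erase_of_mem hdt, htc]
    have hq1 : 1 ≤ q := by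
      have : 1 ≤ t.card := Finset.card_pos.mpr ⟨d, hdt⟩
      omega
    omega

end Counting
end SG
namespace SG
set_option linter.unusedSectionVars false
open Finset
section MergeSplit
open scoped Classical
variable [PartialOrder P] [Fintype P]

noncomputable def mergeF (f : P → ℤ) (d : ℤ) : P → ℤ :=
  fun x => if f x ≤ d then f x else f x - 1

noncomputable def splitF (σ : P → ℤ) (w : P) (d : ℤ) : P → ℤ :=
  fun x => if σ x < d then σ x else if x = w then σ x else σ x + 1

noncomputable def pemb : P → ℕ := fun x => ((Fintype.equivFin P) x : ℕ)

lemma pemb_inj : Function.Injective (pemb (P := P)) :=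
  fun a b h => (Fintype.equivFin P).injective (Fin.ext h)

/-- The tag condition deciding which side a merged pair goes to. -/
def condE (ε : P → P → ℤ) (f : P → ℤ) (d : ℤ) : Prop :=
  ∀ x y : P, f x = d → f y = d + 1 →
    ((y ⋖ x ∧ ε y x = 1) ∨ (¬ x ≤ y ∧ ¬ y ≤ x ∧ pemb x < pemb y))

/-- For adjacent values in a strictly order-reversing map, the pair is
incomparable downward, and a comparison upward must be a cover. -/
lemma tie_structure {f : P → ℤ} (hstrict : ∀ x y : P, x < y → f y < f x)
    {d : ℤ} {u v : P} (hu : f u = d) (hv : f v = d + 1) :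
    u ≠ v ∧ ¬ u ≤ v ∧ (v < u → v ⋖ u) := by
  have hne : u ≠ v := fun h => by rw [h, hv] at hu; omega
  refine ⟨hne, ?_, ?_⟩
  · intro hle
    have := hstrict u v (lt_of_le_of_ne hle hne)
    omega
  · intro hlt
    refine ⟨hlt, fun z hvz hzu => ?_⟩
    have h1 := hstrict v z hvz
    have h2 := hstrict z u hzu
    omega

lemma merge_facts {q : ℕ} {f : P → ℤ}
    (hstrict : ∀ x y : P, x < y → f y < f x)
    (hlb : ∀ x, 1 ≤ f x) (hub : ∀ x, f x ≤ (q:ℤ)+1)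
    (hsurj : ∀ k : ℤ, 1 ≤ k → k ≤ (q:ℤ)+1 → ∃ x, f x = k)
    {d : ℤ} (hd1 : 1 ≤ d) (hdq : d ≤ (q:ℤ)) :
    (∀ x y : P, x ≤ y → mergeF f d y ≤ mergeF f d x) ∧
    (∀ x, 1 ≤ mergeF f d x ∧ mergeF f d x ≤ (q:ℤ)) ∧
    (∀ k : ℤ, 1 ≤ k → k ≤ (q:ℤ) → ∃ x, mergeF f d x = k) ∧
    (∀ x y : P, x < y → mergeF f d y = mergeF f d x → (f y = d ∧ f x = d + 1)) := by
  refine ⟨?_, ?_, ?_, ?_⟩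
  · intro x y hxy
    rcases eq_or_lt_of_le hxy with rfl | hlt
    · exact le_rfl
    · have := hstrict x y hlt
      simp only [mergeF]; split_ifs <;> omega
  · intro x
    have := hlb x; have := hub x
    simp only [mergeF]; split_ifs <;> omega
  · intro k h1 h2
    by_cases hk : k ≤ d
    · obtain ⟨x, hx⟩ := hsurj k h1 (by omega)
      exact ⟨x, by simp only [mergeF]; omega⟩
    · obtain ⟨x, hx⟩ := hsurj (k+1) (by omega) (by omega)
      exact ⟨x, by simp only [mergeF]; omega⟩
  · intro x y hxy heq
    have := hstrict x y hxy
    simp only [mergeF] at heq; split_ifs at heq <;> omega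

/-- Recovering the linear extension from its merge and the tie element. -/
lemma split_merge_recover {f : P → ℤ} (hinj : Function.Injective f)
    {d : ℤ} {u : P} (hu : f u = d) :
    splitF (mergeF f d) u d = f := by
  funext x
  by_cases hx : x = u
  · subst hx
    simp only [splitF, mergeF, hu]
    split_ifs <;> omega
  · have hne : f x ≠ d := fun h => hx (hinj (h.trans hu.symm))
    simp only [splitF, mergeF]
    split_ifs <;> omega

/-- Main properties of the split of a surjection at a tie pair `u,v`
(where `u` is the element receiving the lower value). -/
lemma split_spec {q : ℕ} {σ : P → ℤ}
    (hrev : ∀ x y : P, x ≤ y → σ y ≤ σ x)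
    (hlb : ∀ x, 1 ≤ σ x) (hub : ∀ x, σ x ≤ (q:ℤ))
    (hsurjq : ∀ k : ℤ, 1 ≤ k → k ≤ (q:ℤ) → ∃ x, σ x = k)
    {u v : P} (huv : u ≠ v) (he : σ u = σ v)
    (hfib1 : ∀ x y : P, σ x = σ y → x ≠ y → σ x = σ u)
    (hfib2 : ∀ y, σ y = σ u → y = u ∨ y = v)
    (hcomp : v < u ∨ (¬ u ≤ v ∧ ¬ v ≤ u)) :
    (∀ x y : P, x < y → splitF σ u (σ u) y < splitF σ u (σ u) x) ∧
    (∀ x, 1 ≤ splitF σ u (σ u) x ∧ splitF σ u (σ u) x ≤ (q:ℤ)+1) ∧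
    (∀ k : ℤ, 1 ≤ k → k ≤ (q:ℤ)+1 → ∃ x, splitF σ u (σ u) x = k) ∧
    (∀ x, splitF σ u (σ u) x = σ u → x = u) ∧
    (∀ y, splitF σ u (σ u) y = σ u + 1 → y = v) ∧
    mergeF (splitF σ u (σ u)) (σ u) = σ := by
  set d := σ u with hd
  set f := splitF σ u d with hf
  have fdefu : f u = d := by simp [hf, splitF, hd]
  have fdefv : f v = d + 1 := by
    have h1 : ¬ σ v < d := by omega
    have h2 : v ≠ u := Ne.symm huv
    simp only [hf, splitF, if_neg h1, if_neg h2]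
    omega
  have fdef1 : ∀ x, σ x < d → f x = σ x := by
    intro x hx; simp [hf, splitF, hx]
  have fdef2 : ∀ x, ¬ σ x < d → x ≠ u → f x = σ x + 1 := by
    intro x h1 h2; simp [hf, splitF, h1, h2]
  have hgt : ∀ x, ¬ σ x < d → x ≠ u → x ≠ v → d < σ x := by
    intro x h1 h2 h3
    rcases lt_or_eq_of_le (not_lt.mp h1) with h | h
    · exact h
    · exact absurd (hfib2 x h.symm) (by simp [h2, h3])
  have hstrict : ∀ x y : P, x < y → f y < f x := by
    intro x y hxy
    have hle := hrev x y hxy.le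
    rcases eq_or_lt_of_le hle with heq | hlt
    · -- tie values: {x,y} = {v,u} with x < y, both σ = d
      have hyd : σ y = d := hfib1 y x heq (fun h => hxy.ne h.symm)
      have hxd : σ x = d := heq ▸ hyd
      have hx' := hfib2 x hxd
      have hy' := hfib2 y hyd
      have hxv : x = v ∧ y = u := by
        rcases hx' with rfl | rfl
        · rcases hy' with rfl | rfl
          · exact absurd rfl hxy.ne
          · -- x = u < y = v
            rcases hcomp with h | h
            · exact absurd hxy (asymm h)
            · exact absurd hxy.le h.1
        · rcases hy' with rfl | rfl
          · exact ⟨rfl, rfl⟩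
          · exact absurd rfl hxy.ne
      rw [hxv.1, hxv.2, fdefu, fdefv]
      omega
    · -- σ y < σ x
      by_cases hyd : σ y < d
      · rw [fdef1 y hyd]
        by_cases hxd : σ x < d
        · rw [fdef1 x hxd]; omega
        · by_cases hxu : x = u
          · rw [hxu, fdefu]; omega
          · rw [fdef2 x hxd hxu]; omega
      · by_cases hyu : y = u
        · rw [hyu, fdefu]
          have hxd : ¬ σ x < d := by
            have : σ y = d := by rw [hyu]
            omega
          have hxu : x ≠ u := fun h => hxy.ne (h.trans hyu.symm) -- x = u = y
          rw [fdef2 x hxd hxu]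
          have := hlb x; omega
        · rw [fdef2 y hyd hyu]
          have hxd : ¬ σ x < d := by omega
          have hxu : x ≠ u := by
            intro h
            rw [h] at hlt
            omega
          rw [fdef2 x hxd hxu]; omega
  have hd1 : 1 ≤ d := hlb u
  have hdq : d ≤ (q:ℤ) := hub u
  refine ⟨hstrict, ?_, ?_, ?_, ?_, ?_⟩
  · intro x
    have h1 := hlb x; have h2 := hub x
    simp only [hf, splitF]; split_ifs <;> omega
  · intro k h1 h2
    rcases lt_trichotomy k d with hk | rfl | hk
    · obtain ⟨x, hx⟩ := hsurjq k h1 (by omega)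
      exact ⟨x, by rw [fdef1 x (by omega)]; exact hx⟩
    · exact ⟨u, fdefu⟩
    · by_cases hk2 : k = d + 1
      · exact ⟨v, by rw [fdefv, hk2]⟩
      · obtain ⟨x, hx⟩ := hsurjq (k-1) (by omega) (by omega)
        have hxu : x ≠ u := by intro h; rw [h] at hx; omega
        refine ⟨x, ?_⟩
        rw [fdef2 x (by omega) hxu]
        omega
  · intro x hx
    by_contra hxu
    by_cases hxd : σ x < d
    · rw [fdef1 x hxd] at hx; omega
    · rw [fdef2 x hxd hxu] at hx
      by_cases hxv : x = v
      · rw [hxv] at hx; omega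
      · have := hgt x hxd hxu hxv; omega
  · intro y hy
    by_cases hyd : σ y < d
    · rw [fdef1 y hyd] at hy; omega
    · by_cases hyu : y = u
      · rw [hyu, fdefu] at hy; omega
      · rw [fdef2 y hyd hyu] at hy
        have : σ y = d := by omega
        rcases hfib2 y this with h | h
        · exact absurd h hyu
        · exact h
  · funext x
    by_cases hxd : σ x < d
    · have h := fdef1 x hxd
      simp only [mergeF]; split_ifs <;> omega
    · by_cases hxu : x = u
      · subst hxu
        simp only [mergeF, fdefu]
        split_ifs <;> omega
      · have h := fdef2 x hxd hxu
        simp only [mergeF]; split_ifs <;> omega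

end MergeSplit
end SG
namespace SG
set_option linter.unusedSectionVars false
section IdentityA
open scoped Classical
variable [PartialOrder P] [Fintype P] (ε : P → P → ℤ)

lemma merge_mem_E {q : ℕ} (hq : Fintype.card P = q + 1) {f : P → ℤ}
    (hf : SurjPred ε (q+1) f) {d : ℤ} (hd1 : 1 ≤ d) (hdq : d ≤ (q:ℤ))
    (hc : condE ε f d) : SurjPred ε q (mergeF f d) := by
  obtain ⟨hstrict, hinjf, hexu⟩ := surjp_top hq hf
  have hub : ∀ x, f x ≤ (q:ℤ)+1 := by
    intro x; have := hf.2.1 x; push_cast at this ⊢; linarith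
  have hsurj : ∀ k : ℤ, 1 ≤ k → k ≤ (q:ℤ)+1 → ∃ x, f x = k := by
    intro k h1 h2; obtain ⟨x, hx, -⟩ := hexu k h1 h2; exact ⟨x, hx⟩
  obtain ⟨hrev, hbd, hsj, hexc⟩ := merge_facts hstrict hf.1.1 hub hsurj hd1 hdq
  refine ⟨⟨fun x => (hbd x).1, hrev, ?_⟩, fun x => (hbd x).2, hsj⟩
  intro x y hxy hneg
  rcases eq_or_lt_of_le (hrev x y hxy.le) with heq | hlt
  · exfalso
    obtain ⟨hyd, hxd⟩ := hexc x y hxy.lt heq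
    rcases hc y x hyd hxd with ⟨hcov, hsgn⟩ | ⟨h1, h2, h3⟩
    · omega
    · exact h2 hxy.le
  · exact hlt

lemma merge_mem_F {q : ℕ} (hq : Fintype.card P = q + 1) {f : P → ℤ}
    (hf : SurjPred ε (q+1) f) {d : ℤ} (hd1 : 1 ≤ d) (hdq : d ≤ (q:ℤ))
    (hc : ¬ condE ε f d) : SurjPred (flipL ε) q (mergeF f d) := by
  obtain ⟨hstrict, hinjf, hexu⟩ := surjp_top hq hf
  have hub : ∀ x, f x ≤ (q:ℤ)+1 := by
    intro x; have := hf.2.1 x; push_cast at this ⊢; linarith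
  have hsurj : ∀ k : ℤ, 1 ≤ k → k ≤ (q:ℤ)+1 → ∃ x, f x = k := by
    intro k h1 h2; obtain ⟨x, hx, -⟩ := hexu k h1 h2; exact ⟨x, hx⟩
  obtain ⟨hrev, hbd, hsj, hexc⟩ := merge_facts hstrict hf.1.1 hub hsurj hd1 hdq
  refine ⟨⟨fun x => (hbd x).1, hrev, ?_⟩, fun x => (hbd x).2, hsj⟩
  intro x y hxy hneg
  have hsgn : ε x y = 1 := by simp only [flipL] at hneg; omega
  rcases eq_or_lt_of_le (hrev x y hxy.le) with heq | hlt
  · exfalso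
    obtain ⟨hyd, hxd⟩ := hexc x y hxy.lt heq
    exact hc (fun a b ha hb => by
      have hay : a = y := hinjf (ha.trans hyd.symm)
      have hbx : b = x := hinjf (hb.trans hxd.symm)
      subst hay; subst hbx
      exact Or.inl ⟨hxy, hsgn⟩)
  · exact hlt

/-- The merge map underlying Identity A. -/
noncomputable def Phi {q : ℕ} (hq : Fintype.card P = q + 1)
    (fk : {f : P → ℤ // SurjPred ε (q+1) f} × Fin q) :
    {σ : P → ℤ // SurjPred ε q σ} ⊕ {σ : P → ℤ // SurjPred (flipL ε) q σ} :=
  if h : condE ε fk.1.1 (((fk.2 : ℕ) : ℤ) + 1) then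
    Sum.inl ⟨mergeF fk.1.1 (((fk.2 : ℕ) : ℤ) + 1),
      merge_mem_E ε hq fk.1.2 (by omega) (by have := fk.2.isLt; omega) h⟩
  else
    Sum.inr ⟨mergeF fk.1.1 (((fk.2 : ℕ) : ℤ) + 1),
      merge_mem_F ε hq fk.1.2 (by omega) (by have := fk.2.isLt; omega) h⟩

lemma inj_core (hsign : IsSignLabeling ε) {q : ℕ} (hq : Fintype.card P = q + 1)
    {f f' : P → ℤ} (hf : SurjPred ε (q+1) f) (hf' : SurjPred ε (q+1) f')
    {d d' : ℤ} (hd1 : 1 ≤ d) (hdq : d ≤ (q:ℤ)) (hd1' : 1 ≤ d') (hdq' : d' ≤ (q:ℤ))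
    (hσ : mergeF f d = mergeF f' d')
    (htag : (condE ε f d ∧ condE ε f' d') ∨ (¬ condE ε f d ∧ ¬ condE ε f' d')) :
    d = d' ∧ f = f' := by
  obtain ⟨hstrict, hinjf, hexu⟩ := surjp_top hq hf
  obtain ⟨hstrict', hinjf', hexu'⟩ := surjp_top hq hf'
  obtain ⟨u, hu, huu⟩ := hexu d hd1 (by omega)
  obtain ⟨v, hv, hvv⟩ := hexu (d+1) (by omega) (by omega)
  have huv : u ≠ v := fun h => by rw [h, hv] at hu; omega
  have hmu : mergeF f d u = d := by simp only [mergeF]; omega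
  have hmv : mergeF f d v = d := by simp only [mergeF]; omega
  have h1 : mergeF f' d' u = d := by rw [← hσ]; exact hmu
  have h2 : mergeF f' d' v = d := by rw [← hσ]; exact hmv
  have hne' : f' u ≠ f' v := fun h => huv (hinjf' h)
  have hpair : (f' u = d' ∧ f' v = d' + 1) ∨ (f' u = d' + 1 ∧ f' v = d') := by
    simp only [mergeF] at h1 h2
    split_ifs at h1 h2 <;> omega
  have hdd : d = d' := by
    simp only [mergeF] at h1 h2
    rcases hpair with ⟨ha, hb⟩ | ⟨ha, hb⟩ <;> split_ifs at h1 h2 <;> omega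
  subst hdd
  rcases hpair with ⟨ha, hb⟩ | ⟨ha, hb⟩
  · have e1 := split_merge_recover hinjf hu
    have e2 := split_merge_recover hinjf' ha
    refine ⟨rfl, ?_⟩
    rw [← e1, ← e2, hσ]
  · exfalso
    obtain ⟨-, hnuv, -⟩ := tie_structure hstrict hu hv
    obtain ⟨-, hnvu, -⟩ := tie_structure hstrict' hb ha
    rcases htag with ⟨hc, hc'⟩ | ⟨hc, hc'⟩
    · rcases hc u v hu hv with ⟨hvu, -⟩ | ⟨-, -, hp⟩
      · exact hnvu hvu.le
      · rcases hc' v u hb ha with ⟨huv', -⟩ | ⟨-, -, hp'⟩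
        · exact hnuv huv'.le
        · omega
    · have hdisj : ¬(((v ⋖ u) ∧ ε v u = 1) ∨ (¬ u ≤ v ∧ ¬ v ≤ u ∧ pemb u < pemb v)) :=
        fun hyp => hc (fun a b hfa hfb => by rw [huu a hfa, hvv b hfb]; exact hyp)
      have hdisj' : ¬(((u ⋖ v) ∧ ε u v = 1) ∨ (¬ v ≤ u ∧ ¬ u ≤ v ∧ pemb v < pemb u)) := by
        intro hyp
        apply hc'
        intro a b hfa hfb
        have hav : a = v := hinjf' (hfa.trans hb.symm)
        have hbu : b = u := hinjf' (hfb.trans ha.symm)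
        subst hav; subst hbu
        exact hyp
      have hp1 : ¬ pemb u < pemb v := fun hp => hdisj (Or.inr ⟨hnuv, hnvu, hp⟩)
      have hp2 : ¬ pemb v < pemb u := fun hp => hdisj' (Or.inr ⟨hnvu, hnuv, hp⟩)
      have : pemb u ≠ pemb v := fun h => huv (pemb_inj h)
      omega

theorem identityA (hsign : IsSignLabeling ε) {q : ℕ} (hq : Fintype.card P = q + 1) :
    surjCount ε q + surjCount (flipL ε) q = surjCount ε (q+1) * q := by
  classical
  haveI hE : Finite {σ : P → ℤ // SurjPred ε q σ} :=
    finite_part _ (q:ℤ) (fun σ hσ x => ⟨hσ.1.1 x, hσ.2.1 x⟩)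
  haveI hF : Finite {σ : P → ℤ // SurjPred (flipL ε) q σ} :=
    finite_part _ (q:ℤ) (fun σ hσ x => ⟨hσ.1.1 x, hσ.2.1 x⟩)
  haveI hLE : Finite {f : P → ℤ // SurjPred ε (q+1) f} :=
    finite_part _ ((q:ℤ)+1) (fun σ hσ x => ⟨hσ.1.1 x, by
      have := hσ.2.1 x; push_cast at this ⊢; linarith⟩)
  have hbij : Function.Bijective (Phi ε hq) := by
    constructor
    · rintro ⟨⟨f, hf⟩, k⟩ ⟨⟨f', hf'⟩, k'⟩ heq
      have hd1 : (1:ℤ) ≤ ((k:ℕ):ℤ) + 1 := by omega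
      have hdq : ((k:ℕ):ℤ) + 1 ≤ (q:ℤ) := by have := k.isLt; omega
      have hd1' : (1:ℤ) ≤ ((k':ℕ):ℤ) + 1 := by omega
      have hdq' : ((k':ℕ):ℤ) + 1 ≤ (q:ℤ) := by have := k'.isLt; omega
      have main : (((k:ℕ):ℤ) + 1 = ((k':ℕ):ℤ) + 1) ∧ f = f' := by
        rcases Classical.em (condE ε f (((k:ℕ):ℤ) + 1)) with h | h <;>
          rcases Classical.em (condE ε f' (((k':ℕ):ℤ) + 1)) with h' | h'
        · rw [Phi, Phi, dif_pos h, dif_pos h'] at heq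
          simp only [Sum.inl.injEq, Subtype.mk.injEq] at heq
          exact inj_core ε hsign hq hf hf' hd1 hdq hd1' hdq' heq (Or.inl ⟨h, h'⟩)
        · rw [Phi, Phi, dif_pos h, dif_neg h'] at heq
          simp at heq
        · rw [Phi, Phi, dif_neg h, dif_pos h'] at heq
          simp at heq
        · rw [Phi, Phi, dif_neg h, dif_neg h'] at heq
          simp only [Sum.inr.injEq, Subtype.mk.injEq] at heq
          exact inj_core ε hsign hq hf hf' hd1 hdq hd1' hdq' heq (Or.inr ⟨h, h'⟩)
      have hk : k = k' := by
        have := main.1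
        have hnat : (k:ℕ) = (k':ℕ) := by omega
        exact Fin.ext hnat
      rw [Prod.ext_iff]
      exact ⟨Subtype.ext main.2, hk⟩
    · rintro (⟨σ, hσ⟩ | ⟨σ, hσ⟩)
      -- E side
      · obtain ⟨u₁, v₁, hne, he₁⟩ := surjp_pigeon hq hσ.1.1 hσ.2.1
        obtain ⟨hfib1, hfib2⟩ := surjp_fibers hq hσ.1.1 hσ.2.1 hσ.2.2 hne he₁
        obtain ⟨u, v, huv, he', hor, hfib1', hfib2'⟩ :
            ∃ u v : P, u ≠ v ∧ σ u = σ v ∧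
              ((v < u) ∨ (¬ u ≤ v ∧ ¬ v ≤ u ∧ pemb u < pemb v)) ∧
              (∀ x y : P, σ x = σ y → x ≠ y → σ x = σ u) ∧
              (∀ y : P, σ y = σ u → y = u ∨ y = v) := by
          by_cases h1 : u₁ ≤ v₁
          · refine ⟨v₁, u₁, hne.symm, he₁.symm, Or.inl (lt_of_le_of_ne h1 hne),
              fun x y hxy hne' => (hfib1 x y hxy hne').trans he₁, ?_⟩
            intro y hy
            rcases hfib2 y (hy.trans he₁.symm) with h | h
            · exact Or.inr h
            · exact Or.inl h
          · by_cases h2 : v₁ ≤ u₁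
            · exact ⟨u₁, v₁, hne, he₁, Or.inl (lt_of_le_of_ne h2 hne.symm),
                hfib1, hfib2⟩
            · by_cases h3 : pemb u₁ < pemb v₁
              · exact ⟨u₁, v₁, hne, he₁, Or.inr ⟨h1, h2, h3⟩, hfib1, hfib2⟩
              · have hp : pemb v₁ < pemb u₁ :=
                  lt_of_le_of_ne (not_lt.mp h3) (fun hh => hne (pemb_inj hh).symm)
                refine ⟨v₁, u₁, hne.symm, he₁.symm, Or.inr ⟨h2, h1, hp⟩,
                  fun x y hxy hne' => (hfib1 x y hxy hne').trans he₁, ?_⟩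
                intro y hy
                rcases hfib2 y (hy.trans he₁.symm) with h | h
                · exact Or.inr h
                · exact Or.inl h
        have hcomp' : v < u ∨ (¬ u ≤ v ∧ ¬ v ≤ u) := by
          rcases hor with h | ⟨ha, hb, -⟩
          · exact Or.inl h
          · exact Or.inr ⟨ha, hb⟩
        obtain ⟨hstrict, hbd, hsj, hfibd, hfibd1, hmrg⟩ :=
          split_spec hσ.1.2.1 hσ.1.1 hσ.2.1 hσ.2.2 huv he' hfib1' hfib2' hcomp'
        set d := σ u with hd
        set f := splitF σ u d with hfdef
        have hd1 : 1 ≤ d := hσ.1.1 u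
        have hdq : d ≤ (q:ℤ) := hσ.2.1 u
        have hfmem : SurjPred ε (q+1) f := by
          refine ⟨⟨fun x => (hbd x).1, ?_, fun x y hxy _ => hstrict x y hxy.lt⟩,
            fun x => ?_, fun k h1 h2 => hsj k h1 (by push_cast at h2 ⊢; linarith)⟩
          · intro x y hxy
            rcases eq_or_lt_of_le hxy with rfl | hlt
            · exact le_rfl
            · exact (hstrict x y hlt).le
          · have := (hbd x).2; push_cast; linarith
        refine ⟨(⟨f, hfmem⟩, ⟨(d-1).toNat, by omega⟩), ?_⟩
        have hdk : (((((d-1).toNat : ℕ)) : ℤ) + 1) = d := by omega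
        have hcond : condE ε f ((((d-1).toNat : ℕ) : ℤ) + 1) := by
          rw [hdk]
          intro a b hfa hfb
          have hau : a = u := hfibd a hfa
          have hbv : b = v := hfibd1 b hfb
          rw [hau, hbv]
          rcases hor with hlt | ⟨h1, h2, h3⟩
          · left
            have hcov : v ⋖ u := by
              refine ⟨hlt, fun z hvz hzu => ?_⟩
              have e1 : σ z ≤ σ v := hσ.1.2.1 v z hvz.le
              have e2 : σ u ≤ σ z := hσ.1.2.1 z u hzu.le
              have : σ z = d := by omega
              rcases hfib2' z this with rfl | rfl
              · exact lt_irrefl _ hzu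
              · exact lt_irrefl _ hvz
            refine ⟨hcov, ?_⟩
            rcases hsign v u hcov with h | h
            · exact h
            · exfalso
              have := hσ.1.2.2 v u hcov h
              omega
          · exact Or.inr ⟨h1, h2, h3⟩
        rw [Phi, dif_pos hcond]
        congr 1
        apply Subtype.ext
        show mergeF f _ = σ
        rw [hdk]
        exact hmrg
      -- F side
      · obtain ⟨u₁, v₁, hne, he₁⟩ := surjp_pigeon hq hσ.1.1 hσ.2.1
        obtain ⟨hfib1, hfib2⟩ := surjp_fibers hq hσ.1.1 hσ.2.1 hσ.2.2 hne he₁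
        obtain ⟨u, v, huv, he', hor, hfib1', hfib2'⟩ :
            ∃ u v : P, u ≠ v ∧ σ u = σ v ∧
              ((v < u) ∨ (¬ u ≤ v ∧ ¬ v ≤ u ∧ pemb v < pemb u)) ∧
              (∀ x y : P, σ x = σ y → x ≠ y → σ x = σ u) ∧
              (∀ y : P, σ y = σ u → y = u ∨ y = v) := by
          by_cases h1 : u₁ ≤ v₁
          · refine ⟨v₁, u₁, hne.symm, he₁.symm, Or.inl (lt_of_le_of_ne h1 hne),
              fun x y hxy hne' => (hfib1 x y hxy hne').trans he₁, ?_⟩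
            intro y hy
            rcases hfib2 y (hy.trans he₁.symm) with h | h
            · exact Or.inr h
            · exact Or.inl h
          · by_cases h2 : v₁ ≤ u₁
            · exact ⟨u₁, v₁, hne, he₁, Or.inl (lt_of_le_of_ne h2 hne.symm),
                hfib1, hfib2⟩
            · by_cases h3 : pemb v₁ < pemb u₁
              · exact ⟨u₁, v₁, hne, he₁, Or.inr ⟨h1, h2, h3⟩, hfib1, hfib2⟩
              · have hp : pemb u₁ < pemb v₁ :=
                  lt_of_le_of_ne (not_lt.mp h3) (fun hh => hne.symm (pemb_inj hh).symm)
                refine ⟨v₁, u₁, hne.symm, he₁.symm, Or.inr ⟨h2, h1, hp⟩,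
                  fun x y hxy hne' => (hfib1 x y hxy hne').trans he₁, ?_⟩
                intro y hy
                rcases hfib2 y (hy.trans he₁.symm) with h | h
                · exact Or.inr h
                · exact Or.inl h
        have hcomp' : v < u ∨ (¬ u ≤ v ∧ ¬ v ≤ u) := by
          rcases hor with h | ⟨ha, hb, -⟩
          · exact Or.inl h
          · exact Or.inr ⟨ha, hb⟩
        obtain ⟨hstrict, hbd, hsj, hfibd, hfibd1, hmrg⟩ :=
          split_spec hσ.1.2.1 hσ.1.1 hσ.2.1 hσ.2.2 huv he' hfib1' hfib2' hcomp'
        set d := σ u with hd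
        set f := splitF σ u d with hfdef
        have hd1 : 1 ≤ d := hσ.1.1 u
        have hdq : d ≤ (q:ℤ) := hσ.2.1 u
        have hfmem : SurjPred ε (q+1) f := by
          refine ⟨⟨fun x => (hbd x).1, ?_, fun x y hxy _ => hstrict x y hxy.lt⟩,
            fun x => ?_, fun k h1 h2 => hsj k h1 (by push_cast at h2 ⊢; linarith)⟩
          · intro x y hxy
            rcases eq_or_lt_of_le hxy with rfl | hlt
            · exact le_rfl
            · exact (hstrict x y hlt).le
          · have := (hbd x).2; push_cast; linarith
        refine ⟨(⟨f, hfmem⟩, ⟨(d-1).toNat, by omega⟩), ?_⟩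
        have hdk : (((((d-1).toNat : ℕ)) : ℤ) + 1) = d := by omega
        have hfu : f u = d := by
          show splitF σ u d u = d
          simp only [splitF]
          rw [if_neg (by omega)]
          split_ifs <;> omega
        have hfv : f v = d + 1 := by
          show splitF σ u d v = d + 1
          simp only [splitF]
          rw [if_neg (by omega), if_neg (Ne.symm huv)]
          omega
        have hcond : ¬ condE ε f ((((d-1).toNat : ℕ) : ℤ) + 1) := by
          rw [hdk]
          intro hcond
          rcases hcond u v hfu hfv with ⟨hcov, hsgn⟩ | ⟨h1, h2, h3⟩
          · have hflip : flipL ε v u = -1 := by simp [flipL, hsgn]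
            have := hσ.1.2.2 v u hcov hflip
            omega
          · rcases hor with hlt | ⟨-, -, hp⟩
            · exact h2 hlt.le
            · omega
        rw [Phi, dif_neg hcond]
        congr 1
        apply Subtype.ext
        show mergeF f _ = σ
        rw [hdk]
        exact hmrg
  have hcards := Nat.card_eq_of_bijective _ hbij
  rw [Nat.card_prod, Nat.card_sum] at hcards
  have hfin : Nat.card (Fin q) = q := by simp
  rw [hfin] at hcards
  rw [surjCount_def, surjCount_def, surjCount_def]
  exact hcards.symm

end IdentityA
end SG
namespace SG
set_option linter.unusedSectionVars false
section OmegaShift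
variable [PartialOrder P] [Fintype P] {ε : P → P → ℤ} {r : ℤ}

lemma omega_flip_shift (hsign : IsSignLabeling ε) (hgr : IsEGraded ε r) (m : ℕ) :
    OmegaCount (flipL ε) (m + r.toNat) = OmegaCount ε (m + (-r).toNat) := by
  classical
  have hcast : ((m + r.toNat : ℕ) : ℤ) - r = ((m + (-r).toNat : ℕ) : ℤ) := by
    push_cast; omega
  set ρ := rho ε with hρ
  -- forward map
  have fwd : ∀ σ : P → ℤ,
      (IsPPartition (flipL ε) σ ∧ ∀ x, σ x ≤ ((m + r.toNat : ℕ) : ℤ)) →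
      (IsPPartition ε (fun x => σ x + ρ x - r) ∧
        ∀ x, (fun x => σ x + ρ x - r) x ≤ ((m + (-r).toNat : ℕ) : ℤ)) := by
    rintro σ ⟨⟨hlb, hrev, hstr⟩, hub⟩
    have hcov : ∀ x y : P, x ⋖ y →
        (σ y + ρ y - r ≤ σ x + ρ x - r) ∧
          (ε x y = -1 → σ y + ρ y - r < σ x + ρ x - r) := by
      intro x y hxy
      have hrho := rho_covBy hgr hxy
      rcases hsign x y hxy with h1 | h1
      · have : σ y < σ x := hstr x y hxy (by simp [flipL, h1])
        constructor
        · rw [← hρ] at hrho; omega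
        · intro h; rw [h1] at h; omega
      · have : σ y ≤ σ x := hrev x y hxy.le
        constructor
        · rw [← hρ] at hrho; omega
        · intro _; rw [← hρ] at hrho; omega
    have hrev' : ∀ x y : P, x ≤ y → σ y + ρ y - r ≤ σ x + ρ x - r :=
      antitone_of_covers (τ := fun x => σ x + ρ x - r) (fun a b hab => (hcov a b hab).1)
    refine ⟨⟨?_, hrev', fun x y hxy hneg => (hcov x y hxy).2 hneg⟩, ?_⟩
    · intro x
      show 1 ≤ σ x + ρ x - r
      obtain ⟨y, hxy, hymax⟩ := exists_max_above x
      have h1 := hrev' x y hxy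
      have h2 : ρ y = r := by rw [hρ]; exact rho_max hgr hymax
      have := hlb y
      omega
    · intro x
      show σ x + ρ x - r ≤ ((m + (-r).toNat : ℕ) : ℤ)
      obtain ⟨z, hzx, hzmin⟩ := exists_min_below x
      have h1 := hrev' z x hzx
      have h2 : ρ z = 0 := by rw [hρ]; exact rho_min hgr hzmin
      have := hub z
      omega
  have bwd : ∀ τ : P → ℤ,
      (IsPPartition ε τ ∧ ∀ x, τ x ≤ ((m + (-r).toNat : ℕ) : ℤ)) →
      (IsPPartition (flipL ε) (fun x => τ x - ρ x + r) ∧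
        ∀ x, (fun x => τ x - ρ x + r) x ≤ ((m + r.toNat : ℕ) : ℤ)) := by
    rintro τ ⟨⟨hlb, hrev, hstr⟩, hub⟩
    have hcov : ∀ x y : P, x ⋖ y →
        (τ y - ρ y + r ≤ τ x - ρ x + r) ∧
          (flipL ε x y = -1 → τ y - ρ y + r < τ x - ρ x + r) := by
      intro x y hxy
      have hrho := rho_covBy hgr hxy
      rw [← hρ] at hrho
      rcases hsign x y hxy with h1 | h1
      · have : τ y ≤ τ x := hrev x y hxy.le
        constructor
        · omega
        · intro _; omega
      · have : τ y < τ x := hstr x y hxy h1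
        constructor
        · omega
        · intro h; simp only [flipL, h1] at h; omega
    have hrev' : ∀ x y : P, x ≤ y → τ y - ρ y + r ≤ τ x - ρ x + r :=
      antitone_of_covers (τ := fun x => τ x - ρ x + r) (fun a b hab => (hcov a b hab).1)
    refine ⟨⟨?_, hrev', fun x y hxy hneg => (hcov x y hxy).2 hneg⟩, ?_⟩
    · intro x
      show 1 ≤ τ x - ρ x + r
      obtain ⟨y, hxy, hymax⟩ := exists_max_above x
      have h1 := hrev' x y hxy
      have h2 : ρ y = r := by rw [hρ]; exact rho_max hgr hymax
      have := hlb y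
      omega
    · intro x
      show τ x - ρ x + r ≤ ((m + r.toNat : ℕ) : ℤ)
      obtain ⟨z, hzx, hzmin⟩ := exists_min_below x
      have h1 := hrev' z x hzx
      have h2 : ρ z = 0 := by rw [hρ]; exact rho_min hgr hzmin
      have := hub z
      omega
  apply Nat.card_congr
  refine ⟨fun σ => ⟨fun x => σ.1 x + ρ x - r, fwd σ.1 σ.2⟩,
    fun τ => ⟨fun x => τ.1 x - ρ x + r, bwd τ.1 τ.2⟩, ?_, ?_⟩
  · intro σ; apply Subtype.ext; funext x; simp; ring
  · intro τ; apply Subtype.ext; funext x; simp; ring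

end OmegaShift
end SG
namespace SG
set_option linter.unusedSectionVars false
open Finset
section Expand
variable [PartialOrder P] [Fintype P] [Nonempty P]

variable (ε' : P → P → ℤ) {n : ℕ}

/-- The sigma type of (size, surjection, value set) triples. -/
abbrev DecT (n : ℕ) :=
  Σ i : Fin (Fintype.card P), {τ : P → ℤ // SurjPred ε' (i+1) τ} ×
    {S : Finset ℤ // S ∈ (Finset.Icc (1:ℤ) (n:ℤ)).powersetCard (i+1)}

/-- Decompression: compose a surjection with the increasing enumeration of `S`. -/
noncomputable def decomp (x : DecT ε' n) : P → ℤ := fun z =>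
  ((x.2.2.1.orderIsoOfFin (Finset.mem_powersetCard.mp x.2.2.2).2
      ⟨(x.2.1.1 z - 1).toNat, by
        have h1 := x.2.1.2.1.1 z
        have h2 := x.2.1.2.2.1 z
        push_cast at h2
        omega⟩ : ↥(x.2.2.1 : Finset ℤ)) : ℤ)

lemma decomp_mem (x : DecT ε' n) (z : P) : decomp ε' x z ∈ (x.2.2.1 : Finset ℤ) :=
  Subtype.mem _

lemma decomp_le_iff (x : DecT ε' n) (z w : P) :
    decomp ε' x z ≤ decomp ε' x w ↔ x.2.1.1 z ≤ x.2.1.1 w := by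
  rw [decomp, decomp]
  rw [Subtype.coe_le_coe, OrderIso.le_iff_le, Fin.mk_le_mk]
  have h1 := x.2.1.2.1.1 z
  have h2 := x.2.1.2.1.1 w
  omega

lemma decomp_eq_iff (x : DecT ε' n) (z w : P) :
    decomp ε' x z = decomp ε' x w ↔ x.2.1.1 z = x.2.1.1 w := by
  constructor
  · intro h
    have h1 := (decomp_le_iff ε' x z w).mp h.le
    have h2 := (decomp_le_iff ε' x w z).mp h.ge
    omega
  · intro h
    have h1 := (decomp_le_iff ε' x z w).mpr h.le
    have h2 := (decomp_le_iff ε' x w z).mpr h.ge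
    omega

lemma decomp_partition (x : DecT ε' n) :
    IsPPartition ε' (decomp ε' x) ∧ ∀ z, decomp ε' x z ≤ (n:ℤ) := by
  obtain ⟨hsub, hcard⟩ := Finset.mem_powersetCard.mp x.2.2.2
  have hIcc : ∀ z, decomp ε' x z ∈ Finset.Icc (1:ℤ) (n:ℤ) :=
    fun z => hsub (decomp_mem ε' x z)
  have hbd : ∀ z, 1 ≤ decomp ε' x z ∧ decomp ε' x z ≤ (n:ℤ) :=
    fun z => Finset.mem_Icc.mp (hIcc z)
  refine ⟨⟨fun z => (hbd z).1, ?_, ?_⟩, fun z => (hbd z).2⟩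
  · intro z w hzw
    rw [decomp_le_iff]
    exact x.2.1.2.1.2.1 z w hzw
  · intro z w hzw hneg
    have hle : decomp ε' x w ≤ decomp ε' x z :=
      (decomp_le_iff ε' x w z).mpr (x.2.1.2.1.2.1 z w hzw.le)
    have hne : decomp ε' x w ≠ decomp ε' x z := by
      intro h
      rw [decomp_eq_iff] at h
      have := x.2.1.2.1.2.2 z w hzw hneg
      omega
    exact lt_of_le_of_ne hle hne

lemma decomp_image (x : DecT ε' n) :
    Finset.image (decomp ε' x) Finset.univ = (x.2.2.1 : Finset ℤ) := by
  obtain ⟨hsub, hcard⟩ := Finset.mem_powersetCard.mp x.2.2.2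
  apply Finset.Subset.antisymm
  · intro s hs
    rw [Finset.mem_image] at hs
    obtain ⟨z, -, rfl⟩ := hs
    exact decomp_mem ε' x z
  · intro s hs
    rw [Finset.mem_image]
    set iso := x.2.2.1.orderIsoOfFin hcard
    set j : Fin (x.1 + 1) := iso.symm ⟨s, hs⟩ with hj
    obtain ⟨z, hz⟩ := x.2.1.2.2.2 ((j:ℕ) + 1) (by omega)
      (by have := j.isLt; push_cast; omega)
    refine ⟨z, Finset.mem_univ z, ?_⟩
    have hfin : (⟨(x.2.1.1 z - 1).toNat, by
        have h1 := x.2.1.2.1.1 z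
        have h2 := x.2.1.2.2.1 z
        push_cast at h2
        omega⟩ : Fin (x.1 + 1)) = j := by
      apply Fin.ext
      simp only
      omega
    rw [decomp]
    rw [hfin, hj, OrderIso.apply_symm_apply]
end Expand
end SG
namespace SG
set_option linter.unusedSectionVars false
open Finset
section Expand2
variable [PartialOrder P] [Fintype P] [Nonempty P] (ε' : P → P → ℤ)

lemma omega_expand (n : ℕ) :
    OmegaCount ε' n = ∑ i : Fin (Fintype.card P), surjCount ε' (i+1) * n.choose (i+1) := by
  classical
  set p := Fintype.card P with hp
  set G : DecT ε' n → {σ : P → ℤ // IsPPartition ε' σ ∧ ∀ z, σ z ≤ (n:ℤ)} :=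
    fun x => ⟨decomp ε' x, (decomp_partition ε' x).1, (decomp_partition ε' x).2⟩ with hG
  have hGbij : Function.Bijective G := by
    constructor
    · rintro ⟨i, ⟨τ, hτ⟩, ⟨S, hS⟩⟩ ⟨i', ⟨τ', hτ'⟩, ⟨S', hS'⟩⟩ heq
      simp only [hG, Subtype.mk.injEq] at heq
      have hSS : S = S' := by
        have h1 := decomp_image ε' ⟨i, ⟨τ, hτ⟩, ⟨S, hS⟩⟩
        have h2 := decomp_image ε' ⟨i', ⟨τ', hτ'⟩, ⟨S', hS'⟩⟩
        simp only at h1 h2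
        rw [← h1, ← h2, heq]
      have hii : i = i' := by
        apply Fin.ext
        have c1 := (Finset.mem_powersetCard.mp hS).2
        have c2 := (Finset.mem_powersetCard.mp hS').2
        rw [hSS] at c1
        omega
      subst hii
      subst hSS
      have hττ : τ = τ' := by
        funext z
        have hz := congrFun heq z
        rw [decomp, decomp] at hz
        simp only at hz
        have h3 := (S.orderIsoOfFin (Finset.mem_powersetCard.mp hS).2).injective
          (Subtype.coe_injective hz)
        rw [Fin.mk.injEq] at h3
        have b1 := hτ.1.1 z
        have b2 := hτ'.1.1 z
        omega
      subst hττ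
      rfl
    · rintro ⟨σ, hσ⟩
      set S : Finset ℤ := Finset.image σ Finset.univ with hSdef
      have hmemS : ∀ z, σ z ∈ S := fun z => Finset.mem_image_of_mem σ (Finset.mem_univ z)
      have hSsub : S ⊆ Finset.Icc (1:ℤ) (n:ℤ) := by
        intro s hs; rw [hSdef, Finset.mem_image] at hs
        obtain ⟨z, -, rfl⟩ := hs
        exact Finset.mem_Icc.mpr ⟨hσ.1.1 z, hσ.2 z⟩
      have hSne : 1 ≤ S.card := by
        have h : (Finset.univ : Finset P).Nonempty := Finset.univ_nonempty
        exact Finset.card_pos.mpr (h.image σ)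
      have hSle : S.card ≤ p := by
        calc S.card ≤ (Finset.univ : Finset P).card := Finset.card_image_le
        _ = p := Finset.card_univ
      set i : Fin p := ⟨S.card - 1, by omega⟩ with hi
      have hcard : S.card = (i:ℕ) + 1 := by simp only [hi]; omega
      set iso := S.orderIsoOfFin hcard with hiso
      set τ : P → ℤ := fun z => ((iso.symm ⟨σ z, hmemS z⟩).val : ℤ) + 1 with hτdef
      have hτle : ∀ z w, τ z ≤ τ w ↔ σ z ≤ σ w := by
        intro z w
        have key : iso.symm ⟨σ z, hmemS z⟩ ≤ iso.symm ⟨σ w, hmemS w⟩ ↔ σ z ≤ σ w := by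
          rw [OrderIso.le_iff_le]
          exact Subtype.mk_le_mk
        rw [← key, Fin.le_def]
        simp only [hτdef]
        omega
      have hτmem : SurjPred ε' ((i:ℕ)+1) τ := by
        refine ⟨⟨?_, ?_, ?_⟩, ?_, ?_⟩
        · intro z; simp only [hτdef]; omega
        · intro z w hzw
          rw [hτle]
          exact hσ.1.2.1 z w hzw
        · intro z w hzw hneg
          have hlt : σ w < σ z := hσ.1.2.2 z w hzw hneg
          have h1 : ¬ (τ z ≤ τ w) := fun h => by
            have := (hτle z w).mp h; omega
          omega
        · intro z
          have := (iso.symm ⟨σ z, hmemS z⟩).isLt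
          simp only [hτdef]
          push_cast
          omega
        · intro k hk1 hk2
          have hk2' : (k - 1).toNat < (i:ℕ) + 1 := by push_cast at hk2; omega
          set j : Fin ((i:ℕ)+1) := ⟨(k-1).toNat, hk2'⟩ with hj
          have hmem' : (iso j).val ∈ Finset.image σ Finset.univ := (iso j).2
          rw [Finset.mem_image] at hmem'
          obtain ⟨z, -, hz⟩ := hmem'
          refine ⟨z, ?_⟩
          have he : (⟨σ z, hmemS z⟩ : ↥S) = iso j := Subtype.ext hz
          have h5 : iso.symm ⟨σ z, hmemS z⟩ = iso.symm (iso j) := congrArg iso.symm he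
          rw [OrderIso.symm_apply_apply] at h5
          simp only [hτdef]
          rw [h5]
          simp only [hj]
          omega
      have hSmem : S ∈ (Finset.Icc (1:ℤ) (n:ℤ)).powersetCard ((i:ℕ)+1) :=
        Finset.mem_powersetCard.mpr ⟨hSsub, hcard⟩
      refine ⟨⟨i, ⟨τ, hτmem⟩, ⟨S, hSmem⟩⟩, ?_⟩
      simp only [hG]
      apply Subtype.ext
      simp only
      funext z
      have hb1 := hτmem.1.1 z
      show ((S.orderIsoOfFin (Finset.mem_powersetCard.mp hSmem).2
          ⟨(τ z - 1).toNat, _⟩ : ↥S) : ℤ) = σ z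
      have hfe : (⟨(τ z - 1).toNat, by
          have h1 := hτmem.1.1 z
          have h2 := hτmem.2.1 z
          push_cast at h2
          omega⟩ : Fin ((i:ℕ)+1)) = iso.symm ⟨σ z, hmemS z⟩ := by
        apply Fin.ext
        simp only [hτdef]
        omega
      calc ((S.orderIsoOfFin (Finset.mem_powersetCard.mp hSmem).2
          ⟨(τ z - 1).toNat, _⟩ : ↥S) : ℤ)
          = ((iso (iso.symm ⟨σ z, hmemS z⟩) : ↥S) : ℤ) := by rw [← hfe]
        _ = σ z := by rw [OrderIso.apply_symm_apply]
  -- counting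
  haveI hfin : ∀ i : Fin p, Finite {τ : P → ℤ // SurjPred ε' ((i:ℕ)+1) τ} := fun i =>
    finite_part _ (((i:ℕ):ℤ)+1) (fun σ hσ x => ⟨hσ.1.1 x, by
      have := hσ.2.1 x; push_cast at this ⊢; linarith⟩)
  letI : ∀ i : Fin p, Fintype {τ : P → ℤ // SurjPred ε' ((i:ℕ)+1) τ} := fun i =>
    Fintype.ofFinite _
  rw [OmegaCount, Nat.card_congr (Equiv.ofBijective G hGbij).symm,
    Nat.card_eq_fintype_card, Fintype.card_sigma]
  apply Finset.sum_congr rfl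
  intro i _
  rw [Fintype.card_prod, Fintype.card_coe, Finset.card_powersetCard]
  have hIcc : (Finset.Icc (1:ℤ) (n:ℤ)).card = n := by
    rw [Int.card_Icc]; omega
  rw [hIcc, surjCount_def, Nat.card_eq_fintype_card]

end Expand2
end SG
namespace SG
set_option linter.unusedSectionVars false
open Finset

/-- Forward difference operator. -/
def Dop (g : ℕ → ℤ) : ℕ → ℤ := fun n => g (n+1) - g n

lemma dop_iterate_zero_fun : ∀ k : ℕ, Dop^[k] (fun _ => (0:ℤ)) = fun _ => 0 := by
  intro k
  induction k with
  | zero => rfl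
  | succ k IH =>
    rw [Function.iterate_succ_apply]
    have : Dop (fun _ => (0:ℤ)) = fun _ => 0 := by funext n; simp [Dop]
    rw [this, IH]

lemma dop_iterate_choose : ∀ (k i : ℕ),
    (Dop^[k] (fun n => ((n.choose i : ℕ) : ℤ))) =
      (fun n => if k ≤ i then ((n.choose (i - k) : ℕ) : ℤ) else 0) := by
  intro k
  induction k with
  | zero => intro i; simp
  | succ k IH =>
    intro i
    rw [Function.iterate_succ_apply]
    cases i with
    | zero =>
      have h0 : Dop (fun n => ((n.choose 0 : ℕ):ℤ)) = fun _ => 0 := by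
        funext n; simp [Dop]
      rw [h0, dop_iterate_zero_fun]
      funext n
      rw [if_neg (by omega)]
    | succ i =>
      have h1 : Dop (fun n => ((n.choose (i+1) : ℕ):ℤ)) = fun n => ((n.choose i : ℕ):ℤ) := by
        funext n
        simp only [Dop]
        rw [Nat.choose_succ_succ n i]
        push_cast
        ring
      rw [h1, IH]
      funext n
      by_cases h : k ≤ i
      · rw [if_pos h, if_pos (by omega)]
        have he : i + 1 - (k+1) = i - k := by omega
        rw [he]
      · rw [if_neg h, if_neg (by omega)]

lemma dop_sum {m : ℕ} (c : Fin m → ℤ) (g : Fin m → ℕ → ℤ) :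
    Dop (fun n => ∑ i, c i * g i n) = fun n => ∑ i, c i * (Dop (g i)) n := by
  funext n
  simp only [Dop, ← Finset.sum_sub_distrib, mul_sub]

lemma dop_iterate_sum {m : ℕ} (k : ℕ) (c : Fin m → ℤ) (g : Fin m → ℕ → ℤ) :
    Dop^[k] (fun n => ∑ i, c i * g i n) = fun n => ∑ i, c i * (Dop^[k] (g i)) n := by
  induction k generalizing g with
  | zero => rfl
  | succ k IH =>
    rw [Function.iterate_succ_apply, dop_sum]
    rw [IH (fun i => Dop (g i))]
    funext n
    apply Finset.sum_congr rfl
    intro i _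
    rw [Function.iterate_succ_apply]

lemma dop_iterate_shift (g : ℕ → ℤ) (a k : ℕ) :
    Dop^[k] (fun n => g (n + a)) = fun n => (Dop^[k] g) (n + a) := by
  induction k generalizing g with
  | zero => rfl
  | succ k IH =>
    rw [Function.iterate_succ_apply]
    have h1 : Dop (fun n => g (n + a)) = fun n => (Dop g) (n + a) := by
      funext n
      simp only [Dop]
      rw [Nat.add_right_comm]
    rw [h1, IH (Dop g), Function.iterate_succ_apply]

section Eval
variable [PartialOrder P] [Fintype P] [Nonempty P]

lemma surjCount_zero (ε' : P → P → ℤ) : surjCount ε' 0 = 0 := by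
  have hemp : IsEmpty {σ : P → ℤ // SurjPred ε' 0 σ} := by
    constructor
    rintro ⟨σ, hσ⟩
    obtain ⟨x⟩ := ‹Nonempty P›
    have h1 := hσ.1.1 x
    have h2 := hσ.2.1 x
    simp only [Nat.cast_zero] at h2
    omega
  rw [surjCount_def]
  exact Nat.card_of_isEmpty

lemma dop_eval (ε' : P → P → ℤ) {q : ℕ} (hq : Fintype.card P = q + 1) (n : ℕ) :
    (Dop^[q] (fun m => ((OmegaCount ε' m : ℕ) : ℤ))) n =
      (surjCount ε' q : ℤ) + (surjCount ε' (q+1) : ℤ) * (n:ℤ) := by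
  classical
  have hGf : (fun m => ((OmegaCount ε' m : ℕ) : ℤ)) =
      fun m => ∑ i : Fin (Fintype.card P), ((surjCount ε' ((i:ℕ)+1) : ℕ) : ℤ) *
        ((m.choose ((i:ℕ)+1) : ℕ) : ℤ) := by
    funext m
    rw [omega_expand ε' m]
    push_cast
    rfl
  rw [hGf, dop_iterate_sum]
  show (∑ i : Fin (Fintype.card P), ((surjCount ε' ((i:ℕ)+1) : ℕ) : ℤ) *
      (Dop^[q] (fun m => ((m.choose ((i:ℕ)+1) : ℕ):ℤ))) n) = _
  have hstep : ∀ i : Fin (Fintype.card P),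
      ((surjCount ε' ((i:ℕ)+1) : ℕ) : ℤ) *
        (Dop^[q] (fun m => ((m.choose ((i:ℕ)+1) : ℕ):ℤ))) n =
      ((surjCount ε' ((i:ℕ)+1) : ℕ) : ℤ) *
        (if q ≤ (i:ℕ)+1 then ((n.choose ((i:ℕ)+1-q) : ℕ):ℤ) else 0) := by
    intro i
    rw [dop_iterate_choose]
  rw [Finset.sum_congr rfl (fun i _ => hstep i)]
  rcases Nat.eq_zero_or_pos q with rfl | hqpos
  · -- p = 1, single term
    rw [surjCount_zero]
    have h1 : Fintype.card P = 1 := hq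
    rw [Finset.sum_eq_single_of_mem (⟨0, by omega⟩ : Fin (Fintype.card P))
      (Finset.mem_univ _) (fun b _ hb => absurd (Fin.ext (by omega)) hb)]
    simp
  · set a : Fin (Fintype.card P) := ⟨q-1, by omega⟩ with ha
    set b : Fin (Fintype.card P) := ⟨q, by omega⟩ with hb
    have hab : a ≠ b := by
      intro h
      have := congrArg Fin.val h
      simp only [ha, hb] at this
      omega
    have hvanish : ∀ i : Fin (Fintype.card P), i ∉ ({a, b} : Finset (Fin _)) →
        ((surjCount ε' ((i:ℕ)+1) : ℕ) : ℤ) *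
          (if q ≤ (i:ℕ)+1 then ((n.choose ((i:ℕ)+1-q) : ℕ):ℤ) else 0) = 0 := by
      intro i hi
      simp only [Finset.mem_insert, Finset.mem_singleton] at hi
      push_neg at hi
      have h1 : (i:ℕ) ≠ q - 1 := fun h => hi.1 (Fin.ext (by simp [ha, h]))
      have h2 : (i:ℕ) ≠ q := fun h => hi.2 (Fin.ext (by simp [hb, h]))
      have h3 : (i:ℕ) < Fintype.card P := i.isLt
      rw [if_neg (by omega)]
      ring
    rw [← Finset.sum_subset (Finset.subset_univ ({a, b} : Finset (Fin _)))
      (fun i _ hi => hvanish i hi)]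
    rw [Finset.sum_pair hab]
    have hterm_a : ((surjCount ε' ((a:ℕ)+1) : ℕ) : ℤ) *
        (if q ≤ (a:ℕ)+1 then ((n.choose ((a:ℕ)+1-q) : ℕ):ℤ) else 0) =
        (surjCount ε' q : ℤ) := by
      have hval : (a:ℕ) = q - 1 := rfl
      rw [if_pos (by omega)]
      have h4 : (a:ℕ)+1-q = 0 := by omega
      have h5 : (a:ℕ)+1 = q := by omega
      rw [h4, h5]
      simp
    have hterm_b : ((surjCount ε' ((b:ℕ)+1) : ℕ) : ℤ) *
        (if q ≤ (b:ℕ)+1 then ((n.choose ((b:ℕ)+1-q) : ℕ):ℤ) else 0) =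
        (surjCount ε' (q+1) : ℤ) * (n:ℤ) := by
      have hval : (b:ℕ) = q := rfl
      rw [if_pos (by omega)]
      have h4 : (b:ℕ)+1-q = 1 := by omega
      rw [h4, hval]
      simp [Nat.choose_one_right]
    rw [hterm_a, hterm_b]

lemma surjCount_top_flip (ε : P → P → ℤ) {q : ℕ} (hq : Fintype.card P = q + 1) :
    surjCount ε (q+1) = surjCount (flipL ε) (q+1) := by
  rw [surjCount_def, surjCount_def]
  apply Nat.card_congr
  apply Equiv.subtypeEquivRight
  intro σ
  constructor
  · intro hf
    have hstrict := (surjp_top hq hf).1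
    exact ⟨⟨hf.1.1, hf.1.2.1, fun x y hxy _ => hstrict x y hxy.lt⟩, hf.2⟩
  · intro hf
    have hstrict := (surjp_top hq hf).1
    exact ⟨⟨hf.1.1, hf.1.2.1, fun x y hxy _ => hstrict x y hxy.lt⟩, hf.2⟩

end Eval
end SG

/-- if `P` with `p` elements is sign-graded of rank `r`, then
`2 e_{p-1}(P,ω) = (p + r - 1) e_p(P,ω)`. -/
theorem surj_count_identity {P : Type*} [PartialOrder P] [Fintype P] [Nonempty P]
    (ε : P → P → ℤ) (hsign : IsSignLabeling ε)
    (r : ℤ) (hgr : IsEGraded ε r) :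
    (2 : ℤ) * surjCount ε (Fintype.card P - 1) =
      ((Fintype.card P : ℤ) + r - 1) * surjCount ε (Fintype.card P) := by
  classical
  have hp1 : 1 ≤ Fintype.card P := Fintype.card_pos
  set q : ℕ := Fintype.card P - 1 with hqdef
  have hq : Fintype.card P = q + 1 := by omega
  have hA := SG.identityA ε hsign hq
  -- Identity B via the shift bijection and finite differences
  have hshift : (fun m => ((OmegaCount (SG.flipL ε) (m + r.toNat) : ℕ) : ℤ)) =
      (fun m => ((OmegaCount ε (m + (-r).toNat) : ℕ) : ℤ)) := by
    funext m
    rw [SG.omega_flip_shift hsign hgr m]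
  have e1 := congrFun
    (SG.dop_iterate_shift (fun m => ((OmegaCount (SG.flipL ε) m : ℕ) : ℤ)) r.toNat q) 0
  have e2 := congrFun
    (SG.dop_iterate_shift (fun m => ((OmegaCount ε m : ℕ) : ℤ)) (-r).toNat q) 0
  have h2 : (SG.Dop^[q] (fun m => ((OmegaCount (SG.flipL ε) m : ℕ) : ℤ))) (0 + r.toNat) =
      (SG.Dop^[q] (fun m => ((OmegaCount ε m : ℕ) : ℤ))) (0 + (-r).toNat) := by
    rw [← e1, ← e2]
    exact congrFun (congrArg (fun g => SG.Dop^[q] g) hshift) 0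
  rw [SG.dop_eval (SG.flipL ε) hq, SG.dop_eval ε hq] at h2
  have hflip : surjCount ε (q+1) = surjCount (SG.flipL ε) (q+1) :=
    SG.surjCount_top_flip ε hq
  set EQ : ℤ := (surjCount ε q : ℤ) with hEQ
  set FQ : ℤ := (surjCount (SG.flipL ε) q : ℤ) with hFQ
  set EP : ℤ := (surjCount ε (q+1) : ℤ) with hEP
  have h2' : FQ + EP * ((r.toNat : ℕ) : ℤ) = EQ + EP * (((-r).toNat : ℕ) : ℤ) := by
    rw [← hflip] at h2
    push_cast at h2 ⊢
    linarith [h2]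
  have h3 : FQ - EQ = EP * ((((-r).toNat : ℕ) : ℤ) - ((r.toNat : ℕ) : ℤ)) := by
    rw [mul_sub]; linarith [h2']
  have h4 : ((((-r).toNat : ℕ) : ℤ) - ((r.toNat : ℕ) : ℤ)) = -r := by omega
  rw [h4] at h3
  have hAz : EQ + FQ = EP * (q : ℤ) := by
    rw [hEQ, hFQ, hEP]
    exact_mod_cast congrArg (Nat.cast : ℕ → ℤ) hA
  rw [hq]
  push_cast
  have : ((q:ℤ) + 1 + r - 1) = (q:ℤ) + r := by ring
  rw [this]
  linarith [h3, hAz, mul_add EP (q:ℤ) r]
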